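/- Any two transition kernels in the model-based uncertainty set induce Bellman values that are uniformly close: if P̃₁, P̃₂ ∈ G, then for every h ∈ {1,…,H} and state s, |Ṽ^{P̃₁}_h(s) − Ṽ^{P̃₂}_h(s)| ≤ (β_max − α_min)·(H−h)(H−h+1)/2; in particular |Ṽ^{P̃₁}_1(s) − Ṽ^{P̃₂}_1(s)| ≤ (β_max − α_min)·H(H−1)/2. Since the true marginalized kernel P lies in G, the value estimate Ṽ_1(s) := inf_{P̃∈G} Ṽ^{P̃}_1(s) satisfies |V_1(s) − Ṽ_1(s)| ≤ (β_max − α_min)·H(H−1)/2. -/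
import Mathlib


open Finset

noncomputable section

variable {S U A : Type*}

/-- Marginalized (observed) behavior policy `π_b(a|s) = Σ_u P(u|s) π_b(a|s,u)`. -/
def piMarg [Fintype U] (Pu : S → U → ℝ) (pib : S → U → A → ℝ) (s : S) (a : A) : ℝ :=
  ∑ u, Pu s u * pib s u a

/-- Marginalized transition kernel `P(s'|s,a) = Σ_u P(u|s) T(s'|s,u,a)`. -/
def margKer [Fintype U] (Pu : S → U → ℝ) (T : S → U → A → S → ℝ)
    (s : S) (a : A) (s' : S) : ℝ :=
  ∑ u, Pu s u * T s u a s'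

/-- Confounded observed kernel `P^b(s'|s,a) = Σ_u P(u|s)·(π_b(a|s,u)/π_b(a|s))·T(s'|s,u,a)`. -/
def confKer [Fintype U] (Pu : S → U → ℝ) (pib : S → U → A → ℝ) (T : S → U → A → S → ℝ)
    (s : S) (a : A) (s' : S) : ℝ :=
  ∑ u, Pu s u * (pib s u a / piMarg Pu pib s a) * T s u a s'

/-- Bellman value of the evaluation policy under kernel `P`, indexed by the number of
remaining steps: `Vaux P r πe k = V_{H+1-k}` (so `Vaux _ _ _ 0 = V_{H+1} = 0`). -/
def Vaux [Fintype S] [Fintype A] (P : S → A → S → ℝ) (r : S → A → ℝ) (pie : S → A → ℝ) :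
    ℕ → S → ℝ
  | 0 => fun _ => 0
  | (k + 1) => fun s => ∑ a, pie s a * (r s a + ∑ s', P s a s' * Vaux P r pie k s')

/-- Bellman Q-value with `k` remaining steps *after* the current one:
`Qaux P r πe k = Q_{H-k}`, i.e. `Q_h(s,a) = r(s,a) + Σ_{s'} P(s'|s,a) V_{h+1}(s')`. -/
def Qaux [Fintype S] [Fintype A] (P : S → A → S → ℝ) (r : S → A → ℝ) (pie : S → A → ℝ)
    (k : ℕ) (s : S) (a : A) : ℝ :=
  r s a + ∑ s', P s a s' * Vaux P r pie k s'

/-- Infinite-data FQE iterates indexed by remaining steps: `fqeAux Pb r πe k = f̂_{H+1-k}`,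
so `f̂_{H+1} = 0` and `f̂_h(s,a) = r(s,a) + Σ_{s'} P^b(s'|s,a) Σ_{a'} π_e(a'|s') f̂_{h+1}(s',a')`. -/
def fqeAux [Fintype S] [Fintype A] (Pb : S → A → S → ℝ) (r : S → A → ℝ) (pie : S → A → ℝ) :
    ℕ → S → A → ℝ
  | 0 => fun _ _ => 0
  | (k + 1) => fun s a => r s a + ∑ s', Pb s a s' * ∑ a', pie s' a' * fqeAux Pb r pie k s' a'

/-- Model-based uncertainty set `G`: kernels `P̃` with nonnegative rows summing to one and
`α(s,a)·P^b(s'|s,a) ≤ P̃(s'|s,a) ≤ β(s,a)·P^b(s'|s,a)` for all `s, a, s'`. -/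
def Gset [Fintype S] [Fintype U] [Fintype A] (Pu : S → U → ℝ) (pib : S → U → A → ℝ)
    (T : S → U → A → S → ℝ) (α β : S → A → ℝ) : Set (S → A → S → ℝ) :=
  {Pt | ∀ s a, (∀ s', 0 ≤ Pt s a s') ∧ (∑ s', Pt s a s' = 1) ∧
    ∀ s', α s a * confKer Pu pib T s a s' ≤ Pt s a s' ∧
      Pt s a s' ≤ β s a * confKer Pu pib T s a s'}


section AuxLemmas

variable [Fintype S] [Fintype A]

lemma Vaux_nonneg_aux (P : S → A → S → ℝ) (hP0 : ∀ s a s', 0 ≤ P s a s')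
    (r : S → A → ℝ) (hr0 : ∀ s a, 0 ≤ r s a)
    (pie : S → A → ℝ) (hpie0 : ∀ s a, 0 ≤ pie s a) :
    ∀ k s, 0 ≤ Vaux P r pie k s := by
  intro k
  induction k with
  | zero => intro s; simp [Vaux]
  | succ k ih =>
    intro s
    apply Finset.sum_nonneg
    intro a _
    exact mul_nonneg (hpie0 s a) (add_nonneg (hr0 s a)
      (Finset.sum_nonneg fun s' _ => mul_nonneg (hP0 s a s') (ih s')))

lemma Vaux_le_aux (P : S → A → S → ℝ) (hP0 : ∀ s a s', 0 ≤ P s a s')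
    (hP1 : ∀ s a, ∑ s', P s a s' = 1)
    (r : S → A → ℝ) (hr1 : ∀ s a, r s a ≤ 1)
    (pie : S → A → ℝ) (hpie0 : ∀ s a, 0 ≤ pie s a) (hpie1 : ∀ s, ∑ a, pie s a = 1) :
    ∀ k s, Vaux P r pie k s ≤ k := by
  intro k
  induction k with
  | zero => intro s; simp [Vaux]
  | succ k ih =>
    intro s
    show (∑ a, pie s a * (r s a + ∑ s', P s a s' * Vaux P r pie k s')) ≤ (k + 1 : ℕ)
    calc (∑ a, pie s a * (r s a + ∑ s', P s a s' * Vaux P r pie k s'))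
        ≤ ∑ a, pie s a * (1 + k) := by
          apply Finset.sum_le_sum
          intro a _
          apply mul_le_mul_of_nonneg_left _ (hpie0 s a)
          apply add_le_add (hr1 s a)
          calc (∑ s', P s a s' * Vaux P r pie k s') ≤ ∑ s', P s a s' * k := by
                apply Finset.sum_le_sum
                intro s' _
                exact mul_le_mul_of_nonneg_left (ih s') (hP0 s a s')
            _ = k := by rw [← Finset.sum_mul, hP1 s a, one_mul]
      _ = 1 + k := by rw [← Finset.sum_mul, hpie1 s, one_mul]
      _ = ((k + 1 : ℕ) : ℝ) := by push_cast; ring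

lemma Vaux_close_aux [Nonempty S] [Nonempty A] (P₁ P₂ : S → A → S → ℝ)
    (hP₁0 : ∀ s a s', 0 ≤ P₁ s a s') (hP₁1 : ∀ s a, ∑ s', P₁ s a s' = 1)
    (hP₂0 : ∀ s a s', 0 ≤ P₂ s a s') (hP₂1 : ∀ s a, ∑ s', P₂ s a s' = 1)
    (δ : ℝ) (hδ : ∀ s a, (∑ s', |P₁ s a s' - P₂ s a s'|) ≤ δ)
    (r : S → A → ℝ) (hr0 : ∀ s a, 0 ≤ r s a) (hr1 : ∀ s a, r s a ≤ 1)
    (pie : S → A → ℝ) (hpie0 : ∀ s a, 0 ≤ pie s a) (hpie1 : ∀ s, ∑ a, pie s a = 1) :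
    ∀ k s, |Vaux P₁ r pie k s - Vaux P₂ r pie k s| ≤ δ * k * ((k : ℝ) - 1) / 2 := by
  have hδ0 : 0 ≤ δ := by
    obtain ⟨s⟩ := ‹Nonempty S›
    obtain ⟨a⟩ := ‹Nonempty A›
    exact le_trans (Finset.sum_nonneg fun s' _ => abs_nonneg _) (hδ s a)
  intro k
  induction k with
  | zero => intro s; simp [Vaux]
  | succ k ih =>
    intro s
    have hVle := Vaux_le_aux P₂ hP₂0 hP₂1 r hr1 pie hpie0 hpie1 k
    have hV0 := Vaux_nonneg_aux P₂ hP₂0 r hr0 pie hpie0 k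
    have hQ : ∀ a, |(∑ s', P₁ s a s' * Vaux P₁ r pie k s') -
        (∑ s', P₂ s a s' * Vaux P₂ r pie k s')| ≤ δ * k * ((k : ℝ) - 1) / 2 + δ * k := by
      intro a
      have hsplit : (∑ s', P₁ s a s' * Vaux P₁ r pie k s') -
          (∑ s', P₂ s a s' * Vaux P₂ r pie k s') =
          (∑ s', P₁ s a s' * (Vaux P₁ r pie k s' - Vaux P₂ r pie k s')) +
          (∑ s', (P₁ s a s' - P₂ s a s') * Vaux P₂ r pie k s') := by
        rw [← Finset.sum_add_distrib, ← Finset.sum_sub_distrib]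
        congr 1; ext s'; ring
      rw [hsplit]
      refine le_trans (abs_add_le _ _) (add_le_add ?_ ?_)
      · calc |∑ s', P₁ s a s' * (Vaux P₁ r pie k s' - Vaux P₂ r pie k s')|
            ≤ ∑ s', |P₁ s a s' * (Vaux P₁ r pie k s' - Vaux P₂ r pie k s')| :=
              Finset.abs_sum_le_sum_abs _ _
          _ ≤ ∑ s', P₁ s a s' * (δ * k * ((k : ℝ) - 1) / 2) := by
              apply Finset.sum_le_sum
              intro s' _
              rw [abs_mul, abs_of_nonneg (hP₁0 s a s')]
              exact mul_le_mul_of_nonneg_left (ih s') (hP₁0 s a s')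
          _ = δ * k * ((k : ℝ) - 1) / 2 := by rw [← Finset.sum_mul, hP₁1 s a, one_mul]
      · calc |∑ s', (P₁ s a s' - P₂ s a s') * Vaux P₂ r pie k s'|
            ≤ ∑ s', |(P₁ s a s' - P₂ s a s') * Vaux P₂ r pie k s'| :=
              Finset.abs_sum_le_sum_abs _ _
          _ ≤ ∑ s', |P₁ s a s' - P₂ s a s'| * k := by
              apply Finset.sum_le_sum
              intro s' _
              rw [abs_mul, abs_of_nonneg (hV0 s')]
              exact mul_le_mul_of_nonneg_left (hVle s') (abs_nonneg _)
          _ = (∑ s', |P₁ s a s' - P₂ s a s'|) * k := by rw [Finset.sum_mul]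
          _ ≤ δ * k := by
              exact mul_le_mul_of_nonneg_right (hδ s a) (Nat.cast_nonneg k)
    have hdiff : Vaux P₁ r pie (k + 1) s - Vaux P₂ r pie (k + 1) s =
        ∑ a, pie s a * ((∑ s', P₁ s a s' * Vaux P₁ r pie k s') -
          (∑ s', P₂ s a s' * Vaux P₂ r pie k s')) := by
      show (∑ a, pie s a * (r s a + ∑ s', P₁ s a s' * Vaux P₁ r pie k s')) -
          (∑ a, pie s a * (r s a + ∑ s', P₂ s a s' * Vaux P₂ r pie k s')) = _
      rw [← Finset.sum_sub_distrib]
      congr 1; ext a; ring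
    rw [hdiff]
    calc |∑ a, pie s a * ((∑ s', P₁ s a s' * Vaux P₁ r pie k s') -
          (∑ s', P₂ s a s' * Vaux P₂ r pie k s'))|
        ≤ ∑ a, |pie s a * ((∑ s', P₁ s a s' * Vaux P₁ r pie k s') -
          (∑ s', P₂ s a s' * Vaux P₂ r pie k s'))| := Finset.abs_sum_le_sum_abs _ _
      _ ≤ ∑ a, pie s a * (δ * k * ((k : ℝ) - 1) / 2 + δ * k) := by
          apply Finset.sum_le_sum
          intro a _
          rw [abs_mul, abs_of_nonneg (hpie0 s a)]
          exact mul_le_mul_of_nonneg_left (hQ a) (hpie0 s a)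
      _ = δ * k * ((k : ℝ) - 1) / 2 + δ * k := by rw [← Finset.sum_mul, hpie1 s, one_mul]
      _ = δ * (k + 1 : ℕ) * (((k + 1 : ℕ) : ℝ) - 1) / 2 := by push_cast; ring

end AuxLemmas

/-- Any two kernels in the model-based uncertainty set `G` induce Bellman values within
`(β_max − α_min)·(H−h)(H−h+1)/2` of each other; since the true marginalized kernel lies in
`G`, the model-based estimate `Ṽ_1(s) = inf_{P̃∈G} Ṽ^{P̃}_1(s)` satisfies
`|V_1(s) − Ṽ_1(s)| ≤ (β_max − α_min)·H(H−1)/2`. -/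
theorem model_based_uniform_value_closeness
    [Fintype S] [Fintype U] [Fintype A] [Nonempty S] [Nonempty U] [Nonempty A]
    (H : ℕ) (hH : 1 ≤ H)
    (Pu : S → U → ℝ) (hPu0 : ∀ s u, 0 ≤ Pu s u) (hPu1 : ∀ s, ∑ u, Pu s u = 1)
    (T : S → U → A → S → ℝ) (hT0 : ∀ s u a s', 0 ≤ T s u a s')
    (hT1 : ∀ s u a, ∑ s', T s u a s' = 1)
    (r : S → A → ℝ) (hr0 : ∀ s a, 0 ≤ r s a) (hr1 : ∀ s a, r s a ≤ 1)
    (pib : S → U → A → ℝ) (hpib0 : ∀ s u a, 0 < pib s u a)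
    (hpib1 : ∀ s u, ∑ a, pib s u a = 1)
    (pie : S → A → ℝ) (hpie0 : ∀ s a, 0 ≤ pie s a) (hpie1 : ∀ s, ∑ a, pie s a = 1)
    (α β : S → A → ℝ) (hαpos : ∀ s a, 0 < α s a)
    (hsens : ∀ s u a, α s a ≤ piMarg Pu pib s a / pib s u a ∧
      piMarg Pu pib s a / pib s u a ≤ β s a)
    (αmin βmax : ℝ) (hαmin0 : 0 < αmin)
    (hαmin : ∀ s a, αmin ≤ α s a) (hβmax : ∀ s a, β s a ≤ βmax) :
    (∀ Pt₁ ∈ Gset Pu pib T α β, ∀ Pt₂ ∈ Gset Pu pib T α β,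
      ∀ h : ℕ, 1 ≤ h → h ≤ H → ∀ s : S,
        |Vaux Pt₁ r pie (H + 1 - h) s - Vaux Pt₂ r pie (H + 1 - h) s| ≤
          (βmax - αmin) * ((H - h : ℕ) : ℝ) * (((H - h : ℕ) : ℝ) + 1) / 2) ∧
    (∀ s : S,
      |Vaux (margKer Pu T) r pie H s -
          sInf ((fun Pt : S → A → S → ℝ => Vaux Pt r pie H s) '' Gset Pu pib T α β)| ≤
        (βmax - αmin) * H * ((H : ℝ) - 1) / 2) := by
  -- basic positivity facts
  have hpiM : ∀ s a, 0 < piMarg Pu pib s a := by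
    intro s a
    have : ∀ u ∈ Finset.univ, 0 ≤ Pu s u * pib s u a := fun u _ =>
      mul_nonneg (hPu0 s u) (le_of_lt (hpib0 s u a))
    have hsum : (0:ℝ) < ∑ u, Pu s u := by rw [hPu1 s]; norm_num
    obtain ⟨u, _, hu⟩ : ∃ u ∈ Finset.univ, 0 < Pu s u := by
      by_contra hcon
      push_neg at hcon
      have : (∑ u, Pu s u) ≤ 0 :=
        Finset.sum_nonpos fun u hu => hcon u hu
      linarith
    apply Finset.sum_pos' this ⟨u, Finset.mem_univ u, mul_pos hu (hpib0 s u a)⟩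
  have hconf0 : ∀ s a s', 0 ≤ confKer Pu pib T s a s' := by
    intro s a s'
    apply Finset.sum_nonneg
    intro u _
    exact mul_nonneg (mul_nonneg (hPu0 s u)
      (div_nonneg (le_of_lt (hpib0 s u a)) (le_of_lt (hpiM s a)))) (hT0 s u a s')
  have hconf1 : ∀ s a, ∑ s', confKer Pu pib T s a s' = 1 := by
    intro s a
    unfold confKer
    rw [Finset.sum_comm]
    have : ∀ u, ∑ s', Pu s u * (pib s u a / piMarg Pu pib s a) * T s u a s'
        = Pu s u * pib s u a / piMarg Pu pib s a := by
      intro u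
      rw [← Finset.mul_sum, hT1 s u a, mul_one]
      ring
    rw [Finset.sum_congr rfl fun u _ => this u, ← Finset.sum_div, ← piMarg,
      div_self (ne_of_gt (hpiM s a))]
  -- the abs-sum bound between two kernels in G
  have hδbound : ∀ Pt₁ ∈ Gset Pu pib T α β, ∀ Pt₂ ∈ Gset Pu pib T α β,
      ∀ s a, (∑ s', |Pt₁ s a s' - Pt₂ s a s'|) ≤ βmax - αmin := by
    intro Pt₁ h₁ Pt₂ h₂ s a
    obtain ⟨-, -, hb₁⟩ := h₁ s a
    obtain ⟨-, -, hb₂⟩ := h₂ s a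
    calc (∑ s', |Pt₁ s a s' - Pt₂ s a s'|)
        ≤ ∑ s', (β s a - α s a) * confKer Pu pib T s a s' := by
          apply Finset.sum_le_sum
          intro s' _
          rw [abs_sub_le_iff]
          constructor
          · have := (hb₁ s').2
            have := (hb₂ s').1
            nlinarith
          · have := (hb₂ s').2
            have := (hb₁ s').1
            nlinarith
      _ = β s a - α s a := by rw [← Finset.mul_sum, hconf1 s a, mul_one]
      _ ≤ βmax - αmin := by
          have := hαmin s a
          have := hβmax s a
          linarith
  -- marginalized kernel is in G
  have hmarg : margKer Pu T ∈ Gset Pu pib T α β := by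
    intro s a
    refine ⟨fun s' => Finset.sum_nonneg fun u _ => mul_nonneg (hPu0 s u) (hT0 s u a s'),
      ?_, ?_⟩
    · unfold margKer
      rw [Finset.sum_comm]
      have : ∀ u, ∑ s', Pu s u * T s u a s' = Pu s u := by
        intro u; rw [← Finset.mul_sum, hT1 s u a, mul_one]
      rw [Finset.sum_congr rfl fun u _ => this u, hPu1 s]
    · intro s'
      constructor
      · unfold margKer confKer
        rw [Finset.mul_sum]
        apply Finset.sum_le_sum
        intro u _
        have hle : α s a * (pib s u a / piMarg Pu pib s a) ≤ 1 := by
          have h1 := (hsens s u a).1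
          have h2 : 0 < pib s u a / piMarg Pu pib s a :=
            div_pos (hpib0 s u a) (hpiM s a)
          have h3 : piMarg Pu pib s a / pib s u a * (pib s u a / piMarg Pu pib s a) = 1 := by
            field_simp
            rw [mul_comm (piMarg Pu pib s a) (pib s u a),
              div_self (ne_of_gt (mul_pos (hpib0 s u a) (hpiM s a)))]
          nlinarith
        calc α s a * (Pu s u * (pib s u a / piMarg Pu pib s a) * T s u a s')
            = (α s a * (pib s u a / piMarg Pu pib s a)) * (Pu s u * T s u a s') := by ring
          _ ≤ 1 * (Pu s u * T s u a s') := by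
              exact mul_le_mul_of_nonneg_right hle (mul_nonneg (hPu0 s u) (hT0 s u a s'))
          _ = Pu s u * T s u a s' := one_mul _
      · unfold margKer confKer
        rw [Finset.mul_sum]
        apply Finset.sum_le_sum
        intro u _
        have hge : 1 ≤ β s a * (pib s u a / piMarg Pu pib s a) := by
          have h1 := (hsens s u a).2
          have h2 : 0 < pib s u a / piMarg Pu pib s a :=
            div_pos (hpib0 s u a) (hpiM s a)
          have h3 : piMarg Pu pib s a / pib s u a * (pib s u a / piMarg Pu pib s a) = 1 := by
            field_simp
            rw [mul_comm (piMarg Pu pib s a) (pib s u a),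
              div_self (ne_of_gt (mul_pos (hpib0 s u a) (hpiM s a)))]
          nlinarith
        calc Pu s u * T s u a s' = 1 * (Pu s u * T s u a s') := (one_mul _).symm
          _ ≤ (β s a * (pib s u a / piMarg Pu pib s a)) * (Pu s u * T s u a s') :=
              mul_le_mul_of_nonneg_right hge (mul_nonneg (hPu0 s u) (hT0 s u a s'))
          _ = β s a * (Pu s u * (pib s u a / piMarg Pu pib s a) * T s u a s') := by ring
  have key : ∀ Pt₁ ∈ Gset Pu pib T α β, ∀ Pt₂ ∈ Gset Pu pib T α β, ∀ k s,
      |Vaux Pt₁ r pie k s - Vaux Pt₂ r pie k s| ≤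
        (βmax - αmin) * k * ((k : ℝ) - 1) / 2 := by
    intro Pt₁ h₁ Pt₂ h₂
    exact Vaux_close_aux Pt₁ Pt₂
      (fun s a => (h₁ s a).1) (fun s a => (h₁ s a).2.1)
      (fun s a => (h₂ s a).1) (fun s a => (h₂ s a).2.1)
      (βmax - αmin) (hδbound Pt₁ h₁ Pt₂ h₂) r hr0 hr1 pie hpie0 hpie1
  have hδ0 : (0:ℝ) ≤ βmax - αmin := by
    obtain ⟨s⟩ := ‹Nonempty S›
    obtain ⟨a⟩ := ‹Nonempty A›
    exact le_trans (Finset.sum_nonneg fun s' _ => abs_nonneg _)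
      (hδbound (margKer Pu T) hmarg (margKer Pu T) hmarg s a)
  constructor
  · intro Pt₁ h₁ Pt₂ h₂ h hh1 hhH s
    have hk : ((H - h : ℕ) : ℝ) = ((H + 1 - h : ℕ) : ℝ) - 1 := by
      have : (H + 1 - h : ℕ) = (H - h) + 1 := by omega
      rw [this]; push_cast; ring
    have := key Pt₁ h₁ Pt₂ h₂ (H + 1 - h) s
    rw [hk]
    calc |Vaux Pt₁ r pie (H + 1 - h) s - Vaux Pt₂ r pie (H + 1 - h) s|
        ≤ (βmax - αmin) * ((H + 1 - h : ℕ) : ℝ) * (((H + 1 - h : ℕ) : ℝ) - 1) / 2 := this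
      _ = (βmax - αmin) * (((H + 1 - h : ℕ) : ℝ) - 1) * ((((H + 1 - h : ℕ) : ℝ) - 1) + 1) / 2 := by
          ring
  · intro s
    set Sv : Set ℝ := (fun Pt : S → A → S → ℝ => Vaux Pt r pie H s) '' Gset Pu pib T α β
      with hSv
    have hne : Sv.Nonempty := ⟨_, ⟨margKer Pu T, hmarg, rfl⟩⟩
    have hbdd : BddBelow Sv := by
      refine ⟨0, ?_⟩
      rintro y ⟨Pt, hPt, rfl⟩
      exact Vaux_nonneg_aux Pt (fun s a => (hPt s a).1) r hr0 pie hpie0 H s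
    have hC : ∀ y ∈ Sv, |Vaux (margKer Pu T) r pie H s - y| ≤
        (βmax - αmin) * H * ((H : ℝ) - 1) / 2 := by
      rintro y ⟨Pt, hPt, rfl⟩
      exact key (margKer Pu T) hmarg Pt hPt H s
    have hub : sInf Sv ≤ Vaux (margKer Pu T) r pie H s :=
      csInf_le hbdd ⟨margKer Pu T, hmarg, rfl⟩
    have hlb : Vaux (margKer Pu T) r pie H s - (βmax - αmin) * H * ((H : ℝ) - 1) / 2 ≤
        sInf Sv := by
      apply le_csInf hne
      intro y hy
      have := hC y hy
      rw [abs_sub_le_iff] at this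
      linarith [this.1]
    rw [abs_sub_le_iff]
    constructor
    · linarith
    · have hC0 : (0:ℝ) ≤ (βmax - αmin) * H * ((H : ℝ) - 1) / 2 := by
        have hH1 : (1:ℝ) ≤ (H : ℝ) := by exact_mod_cast hH
        have : (0:ℝ) ≤ (H:ℝ) := by linarith
        nlinarith
      linarith
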